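/- arXiv:2408.05863 — 3 statements merged into one kernel-verified Lean document; each statement's English description precedes it below -/
import Mathlib

section
/- Let n ≥ 1 and let T be an additive subgroup of ℝ^{n+1} which is invariant under SO₀(n,1), i.e. A v ∈ T for every A ∈ SO₀(n,1) and every v ∈ T. If T contains a vector v with η(v) > 0 (a nonzero spacelike vector), then T = ℝ^{n+1}. -/
noncomputable section

open Matrix

/-- Minkowski space `ℝ^{n,1}`: the underlying vector space. -/
abbrev Mink (n : ℕ) := Fin (n + 1) → ℝ

/-- The Minkowski quadratic form `η(u) = u₁² + ⋯ + uₙ² − u_{n+1}²`. -/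
def eta (n : ℕ) (u : Mink n) : ℝ :=
  (∑ i : Fin n, u i.castSucc ^ 2) - u (Fin.last n) ^ 2

/-- The Lorentz group `O(n,1)`: linear automorphisms of `ℝ^{n+1}` preserving `η`. -/
def LorentzGroup (n : ℕ) : Subgroup (GL (Fin (n + 1)) ℝ) where
  carrier := { A | ∀ u : Mink n, eta n ((A : Matrix (Fin (n + 1)) (Fin (n + 1)) ℝ) *ᵥ u) = eta n u }
  one_mem' := by intro u; simp
  mul_mem' := by
    intro A B hA hB u
    simp only [Units.val_mul, ← Matrix.mulVec_mulVec]
    rw [hA, hB]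
  inv_mem' := by
    intro A hA u
    have := hA ((A⁻¹ : GL (Fin (n + 1)) ℝ) *ᵥ u)
    rw [Matrix.mulVec_mulVec, ← Units.val_mul, mul_inv_cancel, Units.val_one,
      Matrix.one_mulVec] at this
    exact this.symm

/-- `SO₀(n,1)`: the identity component of the Lorentz group, as a subgroup of `GL`. -/
def SOo (n : ℕ) : Subgroup (GL (Fin (n + 1)) ℝ) :=
  (Subgroup.connectedComponentOfOne (LorentzGroup n)).map (LorentzGroup n).subtype

namespace MinkAux

open NormedSpace

variable {n : ℕ}

def dvec (n : ℕ) : Fin (n + 1) → ℝ := fun i => if i = Fin.last n then -1 else 1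

def Gmat (n : ℕ) : Matrix (Fin (n + 1)) (Fin (n + 1)) ℝ := Matrix.diagonal (dvec n)

def Bform (n : ℕ) (u w : Mink n) : ℝ := u ⬝ᵥ (Gmat n *ᵥ w)

lemma Bform_eq_sum (u w : Mink n) : Bform n u w = ∑ i, dvec n i * u i * w i := by
  unfold Bform Gmat
  simp [dotProduct, Matrix.mulVec_diagonal]
  exact Finset.sum_congr rfl fun i _ => by ring

lemma dvec_sq (i : Fin (n+1)) : dvec n i * dvec n i = 1 := by
  unfold dvec; split <;> norm_num

lemma eta_eq_B (u : Mink n) : eta n u = Bform n u u := by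
  rw [Bform_eq_sum, eta]
  rw [Fin.sum_univ_castSucc (f := fun i => dvec n i * u i * u i)]
  have h1 : ∀ i : Fin n, dvec n i.castSucc = 1 := fun i => by
    simp [dvec, Fin.ne_of_lt (Fin.castSucc_lt_last i)]
  have h2 : dvec n (Fin.last n) = -1 := by simp [dvec]
  simp [h1, h2]
  rw [Finset.sum_congr rfl (fun (i : Fin n) _ => (sq (u i.castSucc)).symm ▸ rfl : ∀ i ∈ Finset.univ, u i.castSucc ^ 2 = u i.castSucc * u i.castSucc)]
  ring

lemma Bform_comm (u w : Mink n) : Bform n u w = Bform n w u := by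
  rw [Bform_eq_sum, Bform_eq_sum]
  exact Finset.sum_congr rfl fun i _ => by ring

lemma GG : Gmat n * Gmat n = 1 := by
  unfold Gmat
  rw [Matrix.diagonal_mul_diagonal]
  rw [show (fun i => dvec n i * dvec n i) = fun _ => (1:ℝ) from funext fun i => dvec_sq i]
  exact Matrix.diagonal_one

lemma Gsymm : (Gmat n)ᵀ = Gmat n := Matrix.diagonal_transpose _

lemma Ginv : (Gmat n)⁻¹ = Gmat n := Matrix.inv_eq_right_inv GG

lemma exp_lorentz_key {M : Matrix (Fin (n+1)) (Fin (n+1)) ℝ}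
    (hM : Mᵀ * Gmat n = -(Gmat n * M)) :
    (exp M)ᵀ * Gmat n * exp M = Gmat n := by
  have hMt : Mᵀ = Gmat n * -M * (Gmat n)⁻¹ := by
    rw [Ginv]
    have : Mᵀ * (Gmat n * Gmat n) = Gmat n * -M * Gmat n := by
      rw [← Matrix.mul_assoc, hM]; noncomm_ring
    rwa [GG, Matrix.mul_one] at this
  have hE : (exp M)ᵀ = Gmat n * exp (-M) * (Gmat n)⁻¹ := by
    rw [← Matrix.exp_transpose, hMt, Matrix.exp_conj _ _ ((Matrix.isUnit_iff_isUnit_det _).2 (IsUnit.of_mul_eq_one _ (by rw [← Matrix.det_mul, GG, Matrix.det_one])))]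
  rw [hE, Ginv]
  calc Gmat n * exp (-M) * Gmat n * Gmat n * exp M
      = Gmat n * (exp (-M) * exp M) := by rw [Matrix.mul_assoc (Gmat n * exp (-M)), GG]; noncomm_ring
    _ = Gmat n := by
        rw [← Matrix.exp_add_of_commute (-M) M (Commute.refl M).neg_left]
        simp [exp_zero]

lemma eta_exp_mulVec {M : Matrix (Fin (n+1)) (Fin (n+1)) ℝ}
    (hM : Mᵀ * Gmat n = -(Gmat n * M)) (u : Mink n) :
    eta n (exp M *ᵥ u) = eta n u := by
  have key := exp_lorentz_key hM
  set E := exp M with hE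
  rw [eta_eq_B, eta_eq_B]
  unfold Bform
  rw [Matrix.mulVec_mulVec]
  have h1 : E *ᵥ u = u ᵥ* Eᵀ := by rw [← Matrix.mulVec_transpose, Matrix.transpose_transpose]
  rw [h1, dotProduct_mulVec, Matrix.vecMul_vecMul, ← Matrix.mul_assoc, key,
    ← Gsymm, Matrix.vecMul_transpose, Gsymm, dotProduct_comm]

/-- `exp M` as an element of `GL`. -/
def glExp (M : Matrix (Fin (n+1)) (Fin (n+1)) ℝ) : GL (Fin (n+1)) ℝ where
  val := exp M
  inv := exp (-M)
  val_inv := by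
    rw [← Matrix.exp_add_of_commute M (-M) (Commute.refl M).neg_right]
    simp [exp_zero]
  inv_val := by
    rw [← Matrix.exp_add_of_commute (-M) M (Commute.refl M).neg_left]
    simp [exp_zero]

lemma glExp_val (M : Matrix (Fin (n+1)) (Fin (n+1)) ℝ) :
    (glExp M : Matrix (Fin (n+1)) (Fin (n+1)) ℝ) = exp M := rfl

lemma smul_LA {M : Matrix (Fin (n+1)) (Fin (n+1)) ℝ}
    (hM : Mᵀ * Gmat n = -(Gmat n * M)) (s : ℝ) :
    (s • M)ᵀ * Gmat n = -(Gmat n * (s • M)) := by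
  rw [Matrix.transpose_smul, Matrix.smul_mul, hM, Matrix.mul_smul, smul_neg]

lemma glExp_mem_lorentz {M : Matrix (Fin (n+1)) (Fin (n+1)) ℝ}
    (hM : Mᵀ * Gmat n = -(Gmat n * M)) : glExp M ∈ LorentzGroup n :=
  fun u => eta_exp_mulVec hM u

lemma glExp_mem_SOo {M : Matrix (Fin (n+1)) (Fin (n+1)) ℝ}
    (hM : Mᵀ * Gmat n = -(Gmat n * M)) : glExp M ∈ SOo n := by
  have hL : ∀ s : ℝ, glExp (s • M) ∈ LorentzGroup n := fun s => glExp_mem_lorentz (smul_LA hM s)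
  letI : NormedRing (Matrix (Fin (n+1)) (Fin (n+1)) ℝ) := Matrix.linftyOpNormedRing
  letI : NormedAlgebra ℝ (Matrix (Fin (n+1)) (Fin (n+1)) ℝ) := Matrix.linftyOpNormedAlgebra
  have hcont : Continuous (fun s : ℝ => glExp (s • M)) := by
    apply Units.continuous_iff.2
    constructor
    · exact (continuous_iff_continuousAt.2 fun x => (exp_analytic (𝕂 := ℝ) x).continuousAt).comp (continuous_id.smul continuous_const)
    · show Continuous fun s : ℝ => exp (-(s • M))
      exact (continuous_iff_continuousAt.2 fun x => (exp_analytic (𝕂 := ℝ) x).continuousAt).comp ((continuous_id.smul continuous_const).neg)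
  set φ : ℝ → (LorentzGroup n) := fun s => ⟨glExp (s • M), hL s⟩ with hφ
  have hφc : Continuous φ := Continuous.subtype_mk hcont _
  have h10 : φ 0 = 1 := by
    apply Subtype.ext
    apply Units.ext
    show exp ((0:ℝ) • M) = 1
    rw [zero_smul, exp_zero]
  have hS : IsPreconnected (Set.range φ) :=
    Set.image_univ ▸ isPreconnected_univ.image φ hφc.continuousOn
  have h1S : (1 : LorentzGroup n) ∈ Set.range φ := ⟨0, h10⟩
  have hsub : Set.range φ ⊆ connectedComponent (1 : LorentzGroup n) :=
    hS.subset_connectedComponent h1S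
  have hmem : φ 1 ∈ Subgroup.connectedComponentOfOne (LorentzGroup n) :=
    hsub ⟨1, rfl⟩
  refine Subgroup.mem_map.2 ⟨φ 1, hmem, ?_⟩
  show ((φ 1 : LorentzGroup n) : GL (Fin (n+1)) ℝ) = glExp M
  rw [hφ]
  simp [one_smul]


/-- The Lie-algebra element associated to a pair of vectors. -/
def Qm (n : ℕ) (v w : Mink n) : Matrix (Fin (n+1)) (Fin (n+1)) ℝ :=
  Matrix.vecMulVec w (Gmat n *ᵥ v) - Matrix.vecMulVec v (Gmat n *ᵥ w)

lemma Qm_LA (v w : Mink n) : (Qm n v w)ᵀ * Gmat n = -(Gmat n * Qm n v w) := by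
  unfold Qm Gmat
  ext i j
  simp only [Matrix.sub_mul, Matrix.mul_sub, Matrix.transpose_sub, Matrix.sub_apply,
    Matrix.neg_apply, Matrix.transpose_apply, Matrix.mul_diagonal, Matrix.diagonal_mul,
    Matrix.vecMulVec_apply, Matrix.mulVec_diagonal]
  ring

lemma vecMulVec_mulVec (a b x : Mink n) :
    Matrix.vecMulVec a b *ᵥ x = (b ⬝ᵥ x) • a := by
  ext i
  simp [Matrix.mulVec, Matrix.vecMulVec_apply, dotProduct, Finset.mul_sum, mul_assoc,
    mul_comm, mul_left_comm]

lemma Gmv_dot (v x : Mink n) : (Gmat n *ᵥ v) ⬝ᵥ x = Bform n v x := by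
  rw [Bform_eq_sum]
  unfold Gmat
  simp [dotProduct, Matrix.mulVec_diagonal]

lemma Qm_mulVec (v w x : Mink n) :
    Qm n v w *ᵥ x = Bform n v x • w - Bform n w x • v := by
  unfold Qm
  rw [Matrix.sub_mulVec, vecMulVec_mulVec, vecMulVec_mulVec, Gmv_dot, Gmv_dot]


lemma Bform_add_right (u w w' : Mink n) :
    Bform n u (w + w') = Bform n u w + Bform n u w' := by
  simp only [Bform_eq_sum, Pi.add_apply, mul_add, Finset.sum_add_distrib]

lemma Bform_sub_right (u w w' : Mink n) :
    Bform n u (w - w') = Bform n u w - Bform n u w' := by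
  simp only [Bform_eq_sum, Pi.sub_apply, mul_sub, Finset.sum_sub_distrib]

lemma Bform_smul_right (s : ℝ) (u w : Mink n) :
    Bform n u (s • w) = s * Bform n u w := by
  simp only [Bform_eq_sum, Pi.smul_apply, smul_eq_mul, Finset.mul_sum]
  exact Finset.sum_congr rfl fun i _ => by ring

lemma Bform_sub_left (u u' w : Mink n) :
    Bform n (u - u') w = Bform n u w - Bform n u' w := by
  rw [Bform_comm, Bform_sub_right, Bform_comm w u, Bform_comm w u']

lemma Bform_smul_left (s : ℝ) (u w : Mink n) :
    Bform n (s • u) w = s * Bform n u w := by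
  rw [Bform_comm, Bform_smul_right, Bform_comm]

lemma Bform_G (y x : Mink n) : Bform n y (Gmat n *ᵥ x) = y ⬝ᵥ x := by
  unfold Bform
  rw [Matrix.mulVec_mulVec, GG, Matrix.one_mulVec]

lemma Bform_nondeg {y : Mink n} (h : ∀ x, Bform n y x = 0) : y = 0 := by
  have := h (Gmat n *ᵥ y)
  rw [Bform_G] at this
  exact dotProduct_self_eq_zero.mp this

lemma Qm_add (v w w' : Mink n) : Qm n v (w + w') = Qm n v w + Qm n v w' := by
  unfold Qm
  rw [Matrix.mulVec_add]
  ext i j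
  simp [Matrix.vecMulVec_apply]
  ring

lemma Qm_smul (v w : Mink n) (s : ℝ) : Qm n v (s • w) = s • Qm n v w := by
  unfold Qm
  rw [Matrix.mulVec_smul]
  ext i j
  simp [Matrix.vecMulVec_apply]
  ring

lemma Qm_zero (v : Mink n) : Qm n v 0 = 0 := by
  have := Qm_smul v 0 0
  rw [zero_smul, zero_smul] at this
  exact this

/-- linearity of `Qm` in the second argument. -/
def Qlin (n : ℕ) (v : Mink n) : Mink n →ₗ[ℝ] Matrix (Fin (n+1)) (Fin (n+1)) ℝ where
  toFun w := Qm n v w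
  map_add' w w' := Qm_add v w w'
  map_smul' s w := Qm_smul v w s

/-- The derivative of the orbit map, as a linear map. -/
def Dlin (n : ℕ) (v : Mink n) : Mink n →ₗ[ℝ] Mink n where
  toFun w := Qm n v w *ᵥ v
  map_add' w w' := by show Qm n v (w + w') *ᵥ v = _; rw [Qm_add, Matrix.add_mulVec]
  map_smul' s w := by show Qm n v (s • w) *ᵥ v = _; rw [Qm_smul, Matrix.smul_mulVec]; rfl

lemma Dlin_apply (v w : Mink n) : Dlin n v w = Qm n v w *ᵥ v := rfl

lemma hasStrict_orbit (v : Mink n) :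
    HasStrictFDerivAt (fun w : Mink n => exp (Qm n v w) *ᵥ v)
      (LinearMap.toContinuousLinearMap (Dlin n v)) 0 := by
  letI : NormedRing (Matrix (Fin (n+1)) (Fin (n+1)) ℝ) := Matrix.linftyOpNormedRing
  letI : NormedAlgebra ℝ (Matrix (Fin (n+1)) (Fin (n+1)) ℝ) := Matrix.linftyOpNormedAlgebra
  let L1 : Mink n →L[ℝ] Matrix (Fin (n+1)) (Fin (n+1)) ℝ :=
    LinearMap.toContinuousLinearMap (Qlin n v)
  let mv : Matrix (Fin (n+1)) (Fin (n+1)) ℝ →ₗ[ℝ] Mink n :=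
    { toFun := fun A => A *ᵥ v
      map_add' := fun A B => Matrix.add_mulVec A B v
      map_smul' := fun s A => Matrix.smul_mulVec s A v }
  let L2 : Matrix (Fin (n+1)) (Fin (n+1)) ℝ →L[ℝ] Mink n :=
    LinearMap.toContinuousLinearMap mv
  have h1 : HasStrictFDerivAt (exp)
      (1 : Matrix (Fin (n+1)) (Fin (n+1)) ℝ →L[ℝ] Matrix (Fin (n+1)) (Fin (n+1)) ℝ) (L1 0) := by
    rw [map_zero]
    exact hasStrictFDerivAt_exp_zero
  have hc1 := h1.comp (0 : Mink n) L1.hasStrictFDerivAt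
  have hc2 := L2.hasStrictFDerivAt.comp (0 : Mink n) hc1
  have heq : L2.comp ((1 : Matrix (Fin (n+1)) (Fin (n+1)) ℝ →L[ℝ]
      Matrix (Fin (n+1)) (Fin (n+1)) ℝ).comp L1) = LinearMap.toContinuousLinearMap (Dlin n v) :=
    ContinuousLinearMap.ext fun w => rfl
  exact heq ▸ hc2

lemma addSubgroup_eq_top_of_mem_nhds (T : AddSubgroup (Mink n)) (p : Mink n)
    (hp : p ∈ T) (hnT : (T : Set (Mink n)) ∈ nhds p) : T = ⊤ := by
  rw [eq_top_iff]
  intro x _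
  obtain ⟨ε, hε, hball⟩ := Metric.mem_nhds_iff.mp hnT
  set N : ℕ := Nat.ceil (‖x‖ / ε) + 1 with hN
  have hN0 : (0:ℝ) < N := by positivity
  have hxN : ‖x‖ / ε < N := (Nat.le_ceil _).trans_lt (by exact_mod_cast Nat.lt_succ_self _)
  set y : Mink n := (N : ℝ)⁻¹ • x with hy
  have hyn : ‖y‖ < ε := by
    rw [hy, norm_smul, norm_inv, Real.norm_natCast]
    rw [div_lt_iff₀ hε] at hxN
    rw [inv_mul_lt_iff₀ hN0]
    calc ‖x‖ < N * ε := hxN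
    _ = N * ε := rfl
  have hyp : y + p ∈ T := hball (by
    simp only [Metric.mem_ball, dist_eq_norm, add_sub_cancel_right]
    exact hyn)
  have hyT : y ∈ T := by
    have := T.sub_mem hyp hp
    simpa using this
  have hxy : x = N • y := by
    rw [hy, ← Nat.cast_smul_eq_nsmul ℝ, smul_smul, mul_inv_cancel₀ (ne_of_gt hN0), one_smul]
  rw [hxy]
  exact T.nsmul_mem hyT N

end MinkAux

set_option maxHeartbeats 1000000 in
open MinkAux NormedSpace in
/-- An `SO₀(n,1)`-invariant additive subgroup of `ℝ^{n+1}` containing a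
nonzero spacelike vector is all of `ℝ^{n+1}`. -/
theorem invariant_addSubgroup_eq_top_of_spacelike (n : ℕ) (hn : 1 ≤ n)
    (T : AddSubgroup (Mink n))
    (hinv : ∀ A : GL (Fin (n + 1)) ℝ, A ∈ SOo n → ∀ v ∈ T, (A : Matrix (Fin (n + 1)) (Fin (n + 1)) ℝ) *ᵥ v ∈ T)
    (hsp : ∃ v ∈ T, 0 < eta n v) :
    T = ⊤ := by
  classical
  obtain ⟨v, hvT, hc⟩ := hsp
  set c : ℝ := eta n v with hcdef
  have hBvv : Bform n v v = c := (eta_eq_B v).symm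
  have hc0 : c ≠ 0 := ne_of_gt hc
  have hv0 : v ≠ 0 := by
    intro h
    rw [hcdef, h] at hc
    simp [eta] at hc
  -- invariance under exponentials of Lie algebra elements
  have hexpT : ∀ M : Matrix (Fin (n+1)) (Fin (n+1)) ℝ, (Mᵀ * Gmat n = -(Gmat n * M)) →
      ∀ x ∈ T, exp M *ᵥ x ∈ T := by
    intro M hM x hx
    have := hinv (glExp M) (glExp_mem_SOo hM) x hx
    rwa [glExp_val] at this
  -- a nonzero vector orthogonal to v
  set e : Mink n := Pi.single (Fin.last n) 1 with he
  have hBee : Bform n e e = -1 := by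
    rw [Bform_eq_sum, Finset.sum_eq_single (Fin.last n)]
    · simp [he, dvec]
    · intro i _ hi; simp [he, Pi.single_apply, hi]
    · simp
  have hBev : Bform n e v = Bform n v e := Bform_comm e v
  set w₁ : Mink n := c • e - Bform n v e • v with hw₁
  have hBvw₁ : Bform n v w₁ = 0 := by
    rw [hw₁, Bform_sub_right, Bform_smul_right, Bform_smul_right, hBvv]; ring
  have hBw₁w₁ : Bform n w₁ w₁ = -(c*c) - c * (Bform n v e * Bform n v e) := by
    rw [hw₁, Bform_sub_left, Bform_sub_right, Bform_sub_right]
    simp only [Bform_smul_left, Bform_smul_right]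
    rw [hBee, hBvv, hBev]
    ring
  have hw₁0 : w₁ ≠ 0 := by
    intro h
    have h0 : Bform n w₁ w₁ = 0 := by rw [h]; simp [Bform_eq_sum]
    rw [h0] at hBw₁w₁
    nlinarith [sq_nonneg (Bform n v e)]
  -- the curve γ through v
  set γ : ℝ → Mink n := fun s => exp (Qm n v (s • w₁)) *ᵥ v with hγ
  have hγT : ∀ s, γ s ∈ T := fun s => hexpT _ (Qm_LA v (s • w₁)) v hvT
  have hγeta : ∀ s, eta n (γ s) = c := fun s => eta_exp_mulVec (Qm_LA v (s • w₁)) v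
  have hγ0 : γ 0 = v := by
    rw [hγ]
    simp only [zero_smul, Qm_zero, exp_zero, Matrix.one_mulVec]
  have hvneg : v ≠ -v := by
    intro h
    apply hv0
    have h2 : (2:ℝ) • v = 0 := by
      rw [two_smul]; nth_rewrite 2 [h]; simp
    rcases smul_eq_zero.mp h2 with h' | h'
    · norm_num at h'
    · exact h'
  -- find a point on the orbit not equal to ±v
  have hexists : ∃ s, γ s ≠ v ∧ γ s ≠ -v := by
    by_contra hcon
    push_neg at hcon
    have hall : ∀ s, γ s = v ∨ γ s = -v := fun s => or_iff_not_imp_left.mpr (hcon s)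
    have hγc : Continuous γ := by
      letI : NormedRing (Matrix (Fin (n+1)) (Fin (n+1)) ℝ) := Matrix.linftyOpNormedRing
      letI : NormedAlgebra ℝ (Matrix (Fin (n+1)) (Fin (n+1)) ℝ) := Matrix.linftyOpNormedAlgebra
      have hQc : Continuous (fun s : ℝ => Qm n v (s • w₁)) := by
        have : (fun s : ℝ => Qm n v (s • w₁)) = fun s : ℝ => s • Qm n v w₁ :=
          funext fun s => Qm_smul v w₁ s
        rw [this]
        exact continuous_id.smul continuous_const
      exact ((continuous_iff_continuousAt.2 fun x => (exp_analytic (𝕂 := ℝ) x).continuousAt).comp hQc).matrix_mulVec continuous_const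
    have hAcl : IsClosed {s : ℝ | γ s = v} := isClosed_eq hγc continuous_const
    have hBcl : IsClosed {s : ℝ | γ s = -v} := isClosed_eq hγc continuous_const
    have hAopen : IsOpen {s : ℝ | γ s = v} := by
      have hAB : {s : ℝ | γ s = v} = {s : ℝ | γ s = -v}ᶜ := by
        ext s
        simp only [Set.mem_setOf_eq, Set.mem_compl_iff]
        constructor
        · intro h h'; rw [h] at h'; exact hvneg h'
        · intro h; rcases hall s with h1 | h1
          · exact h1
          · exact absurd h1 h
      rw [hAB]
      exact hBcl.isOpen_compl
    have hAuniv : {s : ℝ | γ s = v} = Set.univ :=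
      (isClopen_iff.mp ⟨hAcl, hAopen⟩).resolve_left
        (Set.nonempty_iff_ne_empty.mp ⟨0, hγ0⟩)
    have hγconst : γ = fun _ => v := funext fun s => Set.eq_univ_iff_forall.mp hAuniv s
    -- derivative of γ at 0 : contradiction
    have hsm : HasStrictFDerivAt (fun s : ℝ => s • w₁)
        (ContinuousLinearMap.smulRight (1 : ℝ →L[ℝ] ℝ) w₁) 0 :=
      (ContinuousLinearMap.smulRight (1 : ℝ →L[ℝ] ℝ) w₁).hasStrictFDerivAt
    have h0 : HasStrictFDerivAt (fun w : Mink n => exp (Qm n v w) *ᵥ v)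
        (LinearMap.toContinuousLinearMap (Dlin n v)) ((0:ℝ) • w₁) := by
      rw [zero_smul]
      exact hasStrict_orbit v
    have hγd := h0.comp (0:ℝ) hsm
    rw [hγ.symm.trans hγconst] at hγd
    have hD0 := hγd.hasFDerivAt.unique (hasFDerivAt_const v 0)
    have hval := ContinuousLinearMap.ext_iff.mp hD0 1
    simp only [ContinuousLinearMap.coe_comp', Function.comp_apply,
      ContinuousLinearMap.smulRight_apply, ContinuousLinearMap.one_apply, one_smul,
      LinearMap.coe_toContinuousLinearMap', ContinuousLinearMap.zero_apply] at hval
    rw [Dlin_apply, Qm_mulVec, hBvv, Bform_comm, hBvw₁, zero_smul, sub_zero] at hval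
    exact hw₁0 (by
      rcases smul_eq_zero.mp hval with h | h
      · exact absurd h hc0
      · exact h)
  obtain ⟨s₀, huv, hunv⟩ := hexists
  set u : Mink n := γ s₀ with hu
  have huT : u ∈ T := hγT s₀
  have hBuu : Bform n u u = c := by
    rw [← eta_eq_B, hγeta s₀]
  -- a vector orthogonal to v but not to u
  have hp : ∃ p, Bform n v p = 0 ∧ Bform n u p ≠ 0 := by
    by_contra h
    push_neg at h
    have hvv : v ⬝ᵥ v ≠ 0 := fun h0 => hv0 (dotProduct_self_eq_zero.mp h0)
    have hBvGv : Bform n v (Gmat n *ᵥ v) = v ⬝ᵥ v := Bform_G v v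
    have hclaim : ∀ x, Bform n u x = (Bform n u (Gmat n *ᵥ v) / (v ⬝ᵥ v)) * Bform n v x := by
      intro x
      have hp1 : Bform n v (x - (Bform n v x / (v ⬝ᵥ v)) • (Gmat n *ᵥ v)) = 0 := by
        rw [Bform_sub_right, Bform_smul_right, hBvGv, div_mul_cancel₀ _ hvv, sub_self]
      have hp2 := h _ hp1
      rw [Bform_sub_right, Bform_smul_right, sub_eq_zero] at hp2
      rw [hp2]
      ring
    have hy : u - (Bform n u (Gmat n *ᵥ v) / (v ⬝ᵥ v)) • v = 0 := by
      apply Bform_nondeg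
      intro x
      rw [Bform_sub_left, Bform_smul_left, hclaim x, sub_self]
    have hu_eq : u = (Bform n u (Gmat n *ᵥ v) / (v ⬝ᵥ v)) • v := by
      rw [sub_eq_zero] at hy; exact hy
    set μ : ℝ := Bform n u (Gmat n *ᵥ v) / (v ⬝ᵥ v) with hμ
    have hμ2 : μ * μ * c = c := by
      have := hBuu
      rw [hu_eq, Bform_smul_left, Bform_smul_right, hBvv] at this
      linarith [this]
    have hμ1 : μ = 1 ∨ μ = -1 := by
      apply mul_self_eq_one_iff.mp
      exact mul_right_cancel₀ hc0 (by rw [one_mul]; exact hμ2)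
    rcases hμ1 with h1 | h1
    · rw [h1, one_smul] at hu_eq; exact huv hu_eq
    · rw [h1, neg_smul, one_smul] at hu_eq; exact hunv hu_eq
  obtain ⟨p, hpv, hpu⟩ := hp
  -- the two-parameter map
  set D : Mink n × Mink n →L[ℝ] Mink n :=
    (LinearMap.toContinuousLinearMap (Dlin n v)).comp
        (ContinuousLinearMap.fst ℝ (Mink n) (Mink n)) +
      (LinearMap.toContinuousLinearMap (Dlin n u)).comp
        (ContinuousLinearMap.snd ℝ (Mink n) (Mink n)) with hD
  have hF : HasStrictFDerivAt
      (fun q : Mink n × Mink n => exp (Qm n v q.1) *ᵥ v + exp (Qm n u q.2) *ᵥ u)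
      D ((0, 0) : Mink n × Mink n) := by
    have h1 := (hasStrict_orbit v).comp ((0,0) : Mink n × Mink n)
      (ContinuousLinearMap.fst ℝ (Mink n) (Mink n)).hasStrictFDerivAt
    have h2 := (hasStrict_orbit u).comp ((0,0) : Mink n × Mink n)
      (ContinuousLinearMap.snd ℝ (Mink n) (Mink n)).hasStrictFDerivAt
    exact h1.add h2
  have hsurj : LinearMap.range (D : Mink n × Mink n →ₗ[ℝ] Mink n) = ⊤ := by
    rw [LinearMap.range_eq_top]
    intro x
    set a : Mink n := (Bform n u x / Bform n u p) • p with ha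
    refine ⟨(c⁻¹ • a, c⁻¹ • (x - a)), ?_⟩
    have hBva : Bform n v a = 0 := by
      rw [ha, Bform_smul_right, hpv, mul_zero]
    have hBub : Bform n u (x - a) = 0 := by
      rw [Bform_sub_right, ha, Bform_smul_right, div_mul_cancel₀ _ hpu, sub_self]
    have hDval : D (c⁻¹ • a, c⁻¹ • (x - a)) =
        Dlin n v (c⁻¹ • a) + Dlin n u (c⁻¹ • (x - a)) := by
      rw [hD]
      simp [ContinuousLinearMap.add_apply]
    have h1 : Bform n (c⁻¹ • a) v = 0 := by
      rw [Bform_smul_left, Bform_comm, hBva, mul_zero]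
    have h2 : Bform n (c⁻¹ • (x - a)) u = 0 := by
      rw [Bform_smul_left, Bform_comm, hBub, mul_zero]
    rw [ContinuousLinearMap.coe_coe, hDval, Dlin_apply, Dlin_apply, Qm_mulVec, Qm_mulVec, hBvv, hBuu, h1, h2]
    simp only [zero_smul, sub_zero, smul_smul, mul_inv_cancel₀ hc0, one_smul]
    exact add_sub_cancel a x
  have hmap := hF.map_nhds_eq_of_surj hsurj
  have hrangeT : ∀ q : Mink n × Mink n,
      exp (Qm n v q.1) *ᵥ v + exp (Qm n u q.2) *ᵥ u ∈ T := fun q =>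
    T.add_mem (hexpT _ (Qm_LA v q.1) v hvT) (hexpT _ (Qm_LA u q.2) u huT)
  have hTn : (T : Set (Mink n)) ∈
      nhds (exp (Qm n v (0 : Mink n)) *ᵥ v + exp (Qm n u (0 : Mink n)) *ᵥ u) := by
    rw [← hmap]
    exact Filter.mem_map.2 (Filter.univ_mem' fun q => hrangeT q)
  exact addSubgroup_eq_top_of_mem_nhds T _ (hrangeT (0, 0)) hTn
end
end

section
/- Let n ≥ 1, r > 0, and let T be an additive subgroup of ℝ^{n+1} invariant under SO₀(n,1) which contains some vector v with η(v) = r². Then T contains every vector u ∈ ℝ^{n+1} with η(u) < r²; in particular T contains all timelike and all lightlike vectors. -/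
noncomputable section

open Matrix

namespace MinkAux

open Real

lemma matrix_ext_of_mulVec {m : ℕ} {A B : Matrix (Fin m) (Fin m) ℝ}
    (h : ∀ u : Fin m → ℝ, A *ᵥ u = B *ᵥ u) : A = B := by
  ext k l
  have := congrFun (h (Pi.single l 1)) k
  simpa using this

/-- A "planar" matrix acting as the 2×2 matrix ![![a,b],![c,d]] on coordinates i, j. -/
def plane (n : ℕ) (i j : Fin (n + 1)) (a b c d : ℝ) : Matrix (Fin (n + 1)) (Fin (n + 1)) ℝ :=
  Matrix.of fun k l =>
    if k = i then (if l = i then a else if l = j then b else 0)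
    else if k = j then (if l = i then c else if l = j then d else 0)
    else if l = k then 1 else 0

lemma two_point_sum {m : ℕ} (i j : Fin m) (hij : i ≠ j) (a b : ℝ) (u : Fin m → ℝ) :
    ∑ l, (if l = i then a else if l = j then b else 0) * u l = a * u i + b * u j := by
  have h : ∀ l : Fin m, (if l = i then a else if l = j then b else 0) * u l
      = (if l = i then a * u i else 0) + (if l = j then b * u j else 0) := by
    intro l
    by_cases h1 : l = i
    · subst h1; simp [hij]
    · by_cases h2 : l = j
      · subst h2; simp [Ne.symm hij, h1]
      · simp [h1, h2]
  rw [Finset.sum_congr rfl fun l _ => h l, Finset.sum_add_distrib,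
    Finset.sum_ite_eq' _ i, Finset.sum_ite_eq' _ j]
  simp

lemma plane_mulVec {n : ℕ} {i j : Fin (n + 1)} (hij : i ≠ j) (a b c d : ℝ) (u : Mink n) :
    plane n i j a b c d *ᵥ u = fun k =>
      if k = i then a * u i + b * u j else if k = j then c * u i + d * u j else u k := by
  funext k
  simp only [Matrix.mulVec, dotProduct, plane, Matrix.of_apply]
  by_cases hk : k = i
  · rw [hk]
    simp only [if_pos rfl]
    exact two_point_sum i j hij a b u
  · by_cases hk2 : k = j
    · rw [hk2]
      simp only [if_neg (hk2 ▸ hk), if_pos rfl]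
      exact two_point_sum i j hij c d u
    · simp only [if_neg hk, if_neg hk2]
      have : ∀ l : Fin (n+1), (if l = k then (1:ℝ) else 0) * u l = if l = k then u k else 0 := by
        intro l; by_cases h : l = k <;> simp [h]
      rw [Finset.sum_congr rfl fun l _ => this l, Finset.sum_ite_eq' _ k]
      simp

end MinkAux

namespace MinkAux

open Real

lemma plane_comp {n : ℕ} {i j : Fin (n + 1)} (hij : i ≠ j) (a b c d a' b' c' d' : ℝ)
    (u : Mink n) :
    plane n i j a b c d *ᵥ (plane n i j a' b' c' d' *ᵥ u)
      = plane n i j (a*a'+b*c') (a*b'+b*d') (c*a'+d*c') (c*b'+d*d') *ᵥ u := by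
  rw [plane_mulVec hij, plane_mulVec hij, plane_mulVec hij]
  funext k
  by_cases hk : k = i
  · simp only [hk, if_pos, ite_true, if_neg hij, if_neg (Ne.symm hij)]
    ring
  · by_cases hk2 : k = j
    · simp only [hk2, if_pos, ite_true, if_neg hij, if_neg (Ne.symm hij)]
      ring
    · simp only [if_neg hk, if_neg hk2]

lemma plane_one {n : ℕ} {i j : Fin (n + 1)} (hij : i ≠ j) :
    plane n i j 1 0 0 1 = 1 :=
  matrix_ext_of_mulVec fun u => by
    rw [plane_mulVec hij, Matrix.one_mulVec]
    funext k
    split_ifs with h1 h2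
    · simp [h1]
    · simp [h2]
    · rfl

/-- sums of squares over all indices change only through two designated indices -/
lemma sum_sq_two {m : ℕ} (i j : Fin m) (hij : i ≠ j) (f g : Fin m → ℝ)
    (hfg : ∀ k, k ≠ i → k ≠ j → f k = g k) (hsum : f i ^ 2 + f j ^ 2 = g i ^ 2 + g j ^ 2) :
    ∑ k, f k ^ 2 = ∑ k, g k ^ 2 := by
  have h0 : ∀ k ∈ Finset.univ, k ∉ ({i, j} : Finset (Fin m)) → f k ^ 2 - g k ^ 2 = 0 := by
    intro k _ hk
    simp only [Finset.mem_insert, Finset.mem_singleton, not_or] at hk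
    rw [hfg k hk.1 hk.2]; ring
  have h1 : ∑ k ∈ ({i, j} : Finset (Fin m)), (f k ^ 2 - g k ^ 2)
      = ∑ k, (f k ^ 2 - g k ^ 2) :=
    Finset.sum_subset (Finset.subset_univ _) h0
  rw [Finset.sum_pair hij] at h1
  have h2 : ∑ k, (f k ^ 2 - g k ^ 2) = ∑ k, f k ^ 2 - ∑ k, g k ^ 2 :=
    Finset.sum_sub_distrib _ _
  rw [h2] at h1
  linarith

lemma sum_sq_one {m : ℕ} (i : Fin m) (f g : Fin m → ℝ) (c : ℝ)
    (hfg : ∀ k, k ≠ i → f k = g k) (hsum : f i ^ 2 = g i ^ 2 + c) :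
    ∑ k, f k ^ 2 = (∑ k, g k ^ 2) + c := by
  have h0 : ∀ k ∈ Finset.univ, k ∉ ({i} : Finset (Fin m)) → f k ^ 2 - g k ^ 2 = 0 := by
    intro k _ hk
    simp only [Finset.mem_singleton] at hk
    rw [hfg k hk]; ring
  have h1 : ∑ k ∈ ({i} : Finset (Fin m)), (f k ^ 2 - g k ^ 2)
      = ∑ k, (f k ^ 2 - g k ^ 2) :=
    Finset.sum_subset (Finset.subset_univ _) h0
  rw [Finset.sum_singleton] at h1
  have h2 : ∑ k, (f k ^ 2 - g k ^ 2) = ∑ k, f k ^ 2 - ∑ k, g k ^ 2 :=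
    Finset.sum_sub_distrib _ _
  rw [h2] at h1
  linarith

end MinkAux

namespace MinkAux

open Real

variable {n : ℕ}

lemma castSucc_ne_last (i : Fin n) : (i.castSucc : Fin (n+1)) ≠ Fin.last n :=
  (Fin.castSucc_lt_last i).ne

lemma castSucc_ne (i j : Fin n) (hij : i ≠ j) : (i.castSucc : Fin (n+1)) ≠ j.castSucc :=
  fun h => hij (Fin.castSucc_injective n h)

def rotM (n : ℕ) (i j : Fin n) (θ : ℝ) : Matrix (Fin (n+1)) (Fin (n+1)) ℝ :=
  plane n i.castSucc j.castSucc (cos θ) (-sin θ) (sin θ) (cos θ)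

def boostM (n : ℕ) (i : Fin n) (s : ℝ) : Matrix (Fin (n+1)) (Fin (n+1)) ℝ :=
  plane n i.castSucc (Fin.last n) (cosh s) (sinh s) (sinh s) (cosh s)

lemma eta_rot (i j : Fin n) (hij : i ≠ j) (θ : ℝ) (u : Mink n) :
    eta n (rotM n i j θ *ᵥ u) = eta n u := by
  have hij' := castSucc_ne i j hij
  rw [rotM, plane_mulVec hij']
  unfold eta
  beta_reduce
  have hlast : (if Fin.last n = i.castSucc then cos θ * u i.castSucc + -sin θ * u j.castSucc
      else if Fin.last n = j.castSucc then sin θ * u i.castSucc + cos θ * u j.castSucc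
      else u (Fin.last n)) = u (Fin.last n) := by
    rw [if_neg (Ne.symm (castSucc_ne_last i)), if_neg (Ne.symm (castSucc_ne_last j))]
  rw [hlast]
  congr 1
  apply sum_sq_two i j hij
  · intro k hk1 hk2
    rw [if_neg (castSucc_ne k i hk1), if_neg (castSucc_ne k j hk2)]
  · simp only [if_pos, ite_true, if_neg hij', if_neg (Ne.symm hij')]
    nlinarith [sin_sq_add_cos_sq θ]

lemma eta_boost (i : Fin n) (s : ℝ) (u : Mink n) :
    eta n (boostM n i s *ᵥ u) = eta n u := by
  have hij' := castSucc_ne_last i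
  rw [boostM, plane_mulVec hij']
  unfold eta
  beta_reduce
  have hlast : (if Fin.last n = i.castSucc then cosh s * u i.castSucc + sinh s * u (Fin.last n)
      else if Fin.last n = Fin.last n then sinh s * u i.castSucc + cosh s * u (Fin.last n)
      else u (Fin.last n)) = sinh s * u i.castSucc + cosh s * u (Fin.last n) := by
    rw [if_neg (Ne.symm hij'), if_pos rfl]
  rw [hlast]
  have hsum : ∑ k : Fin n, (if k.castSucc = i.castSucc then
        cosh s * u i.castSucc + sinh s * u (Fin.last n)
      else if k.castSucc = Fin.last n then sinh s * u i.castSucc + cosh s * u (Fin.last n)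
      else u k.castSucc) ^ 2
      = (∑ k : Fin n, u k.castSucc ^ 2)
        + ((sinh s * u i.castSucc + cosh s * u (Fin.last n)) ^ 2 - u (Fin.last n) ^ 2) := by
    apply sum_sq_one i
    · intro k hk
      rw [if_neg (castSucc_ne k i hk), if_neg (castSucc_ne_last k)]
    · simp only [if_pos, ite_true]
      nlinarith [cosh_sq_sub_sinh_sq s]
  rw [hsum]
  ring

end MinkAux

namespace MinkAux

open Real

lemma oneParam_SOo {n : ℕ} (f : ℝ → Matrix (Fin (n+1)) (Fin (n+1)) ℝ)
    (hc : Continuous f) (h0 : f 0 = 1)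
    (hadd : ∀ s t u, f s *ᵥ (f t *ᵥ u) = f (s + t) *ᵥ u)
    (heta : ∀ s u, eta n (f s *ᵥ u) = eta n u) (s : ℝ) :
    ∃ A ∈ SOo n, (A : Matrix (Fin (n+1)) (Fin (n+1)) ℝ) = f s := by
  have hmul : ∀ a b, f a * f b = f (a + b) := fun a b =>
    matrix_ext_of_mulVec fun u => by rw [← Matrix.mulVec_mulVec, hadd]
  have hinv1 : ∀ a, f a * f (-a) = 1 := fun a => by rw [hmul, add_neg_cancel, h0]
  have hinv2 : ∀ a, f (-a) * f a = 1 := fun a => by rw [hmul, neg_add_cancel, h0]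
  let g : ℝ → GL (Fin (n+1)) ℝ := fun a => ⟨f a, f (-a), hinv1 a, hinv2 a⟩
  have hg : ∀ a, g a ∈ LorentzGroup n := fun a => heta a
  let L : ℝ → LorentzGroup n := fun a => ⟨g a, hg a⟩
  have hL0 : L 0 = 1 := by
    apply Subtype.ext
    apply Units.ext
    show f 0 = 1
    exact h0
  have hcontL : Continuous L := by
    apply Continuous.subtype_mk
    apply Units.continuous_iff.mpr
    constructor
    · exact hc
    · show Continuous fun a => f (-a)
      exact hc.comp continuous_neg
  have hpath : Joined (L 0) (L s) := by
    refine ⟨⟨⟨fun t => L ((t : ℝ) * s), ?_⟩, by simp, by simp⟩⟩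
    exact hcontL.comp (continuous_subtype_val.mul continuous_const)
  have hmem : L s ∈ connectedComponent (1 : LorentzGroup n) := by
    rw [← hL0]
    exact pathComponent_subset_component _ hpath
  exact ⟨g s, Subgroup.mem_map.mpr ⟨L s, hmem, rfl⟩, rfl⟩

lemma plane_continuous {n : ℕ} (i j : Fin (n+1)) {a b c d : ℝ → ℝ}
    (ha : Continuous a) (hb : Continuous b) (hc : Continuous c) (hd : Continuous d) :
    Continuous fun s => plane n i j (a s) (b s) (c s) (d s) := by
  apply continuous_matrix
  intro k l
  simp only [plane, Matrix.of_apply]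
  split_ifs <;> first | exact ha | exact hb | exact hc | exact hd |
    exact continuous_const

lemma rotM_mem_SOo {n : ℕ} (i j : Fin n) (hij : i ≠ j) (θ : ℝ) :
    ∃ A ∈ SOo n, (A : Matrix (Fin (n+1)) (Fin (n+1)) ℝ) = rotM n i j θ := by
  have hij' := castSucc_ne i j hij
  apply oneParam_SOo
  · exact plane_continuous _ _ Real.continuous_cos (Real.continuous_sin.neg)
      Real.continuous_sin Real.continuous_cos
  · show plane n _ _ (cos 0) (-sin 0) (sin 0) (cos 0) = 1
    rw [Real.cos_zero, Real.sin_zero, neg_zero]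
    exact plane_one hij'
  · intro a b u
    unfold rotM
    rw [plane_comp hij']
    congr 1 <;> rw [Real.cos_add, Real.sin_add] <;> ring
  · intro a u
    exact eta_rot i j hij a u

lemma boostM_mem_SOo {n : ℕ} (i : Fin n) (s : ℝ) :
    ∃ A ∈ SOo n, (A : Matrix (Fin (n+1)) (Fin (n+1)) ℝ) = boostM n i s := by
  have hij' := castSucc_ne_last i
  apply oneParam_SOo
  · exact plane_continuous _ _ Real.continuous_cosh Real.continuous_sinh
      Real.continuous_sinh Real.continuous_cosh
  · show plane n _ _ (cosh 0) (sinh 0) (sinh 0) (cosh 0) = 1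
    rw [Real.cosh_zero, Real.sinh_zero]
    exact plane_one hij'
  · intro a b u
    unfold boostM
    rw [plane_comp hij']
    congr 1 <;> rw [Real.cosh_add, Real.sinh_add] <;> ring
  · intro a u
    exact eta_boost i a u

end MinkAux

namespace MinkAux

open Real

lemma SOo_eta {n : ℕ} {A : GL (Fin (n+1)) ℝ} (hA : A ∈ SOo n) (u : Mink n) :
    eta n ((A : Matrix (Fin (n+1)) (Fin (n+1)) ℝ) *ᵥ u) = eta n u := by
  obtain ⟨B, _, rfl⟩ := Subgroup.mem_map.mp hA
  exact B.2 u

lemma exists_rot_zero (a b : ℝ) : ∃ θ : ℝ, Real.sin θ * a + Real.cos θ * b = 0 := by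
  by_cases ha : a = 0
  · exact ⟨Real.pi / 2, by simp [ha]⟩
  · refine ⟨Real.arctan (-b / a), ?_⟩
    have hc : Real.cos (Real.arctan (-b / a)) ≠ 0 := (Real.cos_arctan_pos _).ne'
    have h1 : Real.sin (Real.arctan (-b / a))
        = (-b / a) * Real.cos (Real.arctan (-b / a)) := by
      have := Real.tan_eq_sin_div_cos (Real.arctan (-b / a))
      rw [Real.tan_arctan] at this
      field_simp at this ⊢
      linarith [this]
    rw [h1]
    field_simp
    ring

lemma exists_cosh (p q : ℝ) (h : q ^ 2 - p ^ 2 = 1) (hq : 0 < q) :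
    ∃ m : ℝ, Real.cosh m = q ∧ Real.sinh m = p := by
  refine ⟨Real.arsinh p, ?_, Real.sinh_arsinh p⟩
  rw [Real.cosh_arsinh, show 1 + p ^ 2 = q ^ 2 by linarith]
  exact Real.sqrt_sq hq.le

lemma reduce_aux (n : ℕ) (hn : 0 < n) (m : ℕ) (u : Mink n) :
    ∃ A ∈ SOo n,
      (∀ i : Fin n, 0 < i.val → i.val < m →
        ((A : Matrix (Fin (n+1)) (Fin (n+1)) ℝ) *ᵥ u) i.castSucc = 0) ∧
      (∀ i : Fin n, m ≤ i.val →
        ((A : Matrix (Fin (n+1)) (Fin (n+1)) ℝ) *ᵥ u) i.castSucc = u i.castSucc) ∧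
      ((A : Matrix (Fin (n+1)) (Fin (n+1)) ℝ) *ᵥ u) (Fin.last n) = u (Fin.last n) := by
  induction m with
  | zero =>
    refine ⟨1, one_mem _, fun i hi0 hi => by omega, fun i _ => ?_, ?_⟩ <;>
      simp [Units.val_one, Matrix.one_mulVec]
  | succ m ih =>
    obtain ⟨A, hA, h1, h2, h3⟩ := ih
    by_cases hm : 0 < m ∧ m < n
    · set i0 : Fin n := ⟨0, hn⟩ with hi0def
      set im : Fin n := ⟨m, hm.2⟩ with himdef
      have hi0v : i0.val = 0 := rfl
      have himv : im.val = m := rfl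
      have hne : i0 ≠ im := by
        rw [Ne, Fin.ext_iff, hi0v, himv]
        omega
      have hne' := castSucc_ne i0 im hne
      set w := (A : Matrix (Fin (n+1)) (Fin (n+1)) ℝ) *ᵥ u with hw
      obtain ⟨θ, hθ⟩ := exists_rot_zero (w i0.castSucc) (w im.castSucc)
      obtain ⟨R, hR, hRval⟩ := rotM_mem_SOo i0 im hne θ
      have hact : ((R * A : GL (Fin (n+1)) ℝ) : Matrix (Fin (n+1)) (Fin (n+1)) ℝ) *ᵥ u
          = rotM n i0 im θ *ᵥ w := by
        rw [Units.val_mul, ← Matrix.mulVec_mulVec, hRval, hw]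
      have hform : ∀ k, (rotM n i0 im θ *ᵥ w) k
          = if k = i0.castSucc then cos θ * w i0.castSucc + -sin θ * w im.castSucc
            else if k = im.castSucc then sin θ * w i0.castSucc + cos θ * w im.castSucc
            else w k :=
        fun k => congrFun (plane_mulVec hne' (cos θ) (-sin θ) (sin θ) (cos θ) w) k
      refine ⟨R * A, mul_mem hR hA, ?_, ?_, ?_⟩
      · intro i hipos hilt
        rw [hact, hform]
        by_cases hiim : i = im
        · rw [if_neg (by rw [hiim]; exact Ne.symm hne'), if_pos (by rw [hiim])]
          exact hθ
        · have hii0 : i ≠ i0 := fun h => by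
            rw [Fin.ext_iff, hi0v] at h
            omega
          rw [if_neg (castSucc_ne i i0 hii0), if_neg (castSucc_ne i im hiim)]
          apply h1 i hipos
          have : i.val ≠ m := fun h => hiim (Fin.ext (by rw [himv]; exact h))
          omega
      · intro i hi
        have hii0 : i ≠ i0 := fun h => by
          rw [Fin.ext_iff, hi0v] at h
          omega
        have hiim : i ≠ im := fun h => by
          rw [Fin.ext_iff, himv] at h
          omega
        rw [hact, hform, if_neg (castSucc_ne i i0 hii0), if_neg (castSucc_ne i im hiim)]
        exact h2 i (by omega)
      · rw [hact, hform, if_neg (Ne.symm (castSucc_ne_last i0)),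
          if_neg (Ne.symm (castSucc_ne_last im))]
        exact h3
    · refine ⟨A, hA, ?_, fun i hi => h2 i (by omega), h3⟩
      intro i hi0 him
      by_cases h : i.val < m
      · exact h1 i hi0 h
      · exfalso
        have := i.isLt
        exact hm ⟨by omega, by omega⟩

end MinkAux

namespace MinkAux

open Real

variable {n : ℕ}

/-- The canonical vector supported on the first spatial coordinate and the time coordinate. -/
def cvec (n : ℕ) (hn : 0 < n) (a b : ℝ) : Mink n :=
  fun k => if k = (⟨0, hn⟩ : Fin n).castSucc then a else if k = Fin.last n then b else 0

lemma cvec_sub (hn : 0 < n) (a b a' b' : ℝ) :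
    cvec n hn a b - cvec n hn a' b' = cvec n hn (a - a') (b - b') := by
  funext k
  simp only [cvec, Pi.sub_apply]
  split_ifs <;> ring

lemma cvec_neg (hn : 0 < n) (a b : ℝ) : -cvec n hn a b = cvec n hn (-a) (-b) := by
  funext k
  simp only [cvec, Pi.neg_apply]
  split_ifs <;> ring

lemma eta_cvec (hn : 0 < n) (a b : ℝ) : eta n (cvec n hn a b) = a ^ 2 - b ^ 2 := by
  unfold eta cvec
  have hlast : (if Fin.last n = (⟨0, hn⟩ : Fin n).castSucc then a
      else if Fin.last n = Fin.last n then b else 0) = b := by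
    rw [if_neg (Ne.symm (castSucc_ne_last _)), if_pos rfl]
  rw [hlast]
  congr 1
  have h1 : ∀ i : Fin n, (if i.castSucc = (⟨0, hn⟩ : Fin n).castSucc then a
      else if i.castSucc = Fin.last n then b else 0) ^ 2
      = if i = (⟨0, hn⟩ : Fin n) then a ^ 2 else 0 := by
    intro i
    by_cases hi : i = (⟨0, hn⟩ : Fin n)
    · rw [if_pos (by rw [hi]), if_pos hi]
    · rw [if_neg (castSucc_ne i _ hi), if_neg (castSucc_ne_last i), if_neg hi]
      ring
  rw [Finset.sum_congr rfl fun i _ => h1 i, Finset.sum_ite_eq' Finset.univ]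
  simp

lemma eq_cvec_of_zeros (hn : 0 < n) (w : Mink n)
    (h : ∀ i : Fin n, 0 < i.val → w i.castSucc = 0) :
    w = cvec n hn (w (⟨0, hn⟩ : Fin n).castSucc) (w (Fin.last n)) := by
  funext k
  unfold cvec
  by_cases hk : k = (⟨0, hn⟩ : Fin n).castSucc
  · rw [if_pos hk, hk]
  · rw [if_neg hk]
    by_cases hk2 : k = Fin.last n
    · rw [if_pos hk2, hk2]
    · rw [if_neg hk2]
      obtain ⟨i, rfl⟩ := Fin.exists_castSucc_eq.mpr hk2
      apply h i
      have hne0 : i ≠ (⟨0, hn⟩ : Fin n) := fun hh => hk (by rw [hh])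
      exact Nat.pos_of_ne_zero fun h0 => hne0 (Fin.ext h0)

lemma boost_cvec (hn : 0 < n) (s a b : ℝ) :
    boostM n (⟨0, hn⟩ : Fin n) s *ᵥ cvec n hn a b
      = cvec n hn (cosh s * a + sinh s * b) (sinh s * a + cosh s * b) := by
  have hne := castSucc_ne_last (⟨0, hn⟩ : Fin n)
  rw [boostM, plane_mulVec hne]
  funext k
  have hv1 : cvec n hn a b (⟨0, hn⟩ : Fin n).castSucc = a := if_pos rfl
  have hv2 : cvec n hn a b (Fin.last n) = b := by
    unfold cvec
    rw [if_neg (Ne.symm hne), if_pos rfl]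
  by_cases hk : k = (⟨0, hn⟩ : Fin n).castSucc
  · simp only [hk, if_pos, ite_true, hv1, hv2]
    rw [show cvec n hn (cosh s * a + sinh s * b) (sinh s * a + cosh s * b)
        (⟨0, hn⟩ : Fin n).castSucc = cosh s * a + sinh s * b from if_pos rfl]
  · by_cases hk2 : k = Fin.last n
    · rw [if_neg (hk2 ▸ hk), if_pos hk2, hv1, hv2, hk2]
      unfold cvec
      rw [if_neg (Ne.symm hne), if_pos rfl]
    · rw [if_neg hk, if_neg hk2]
      unfold cvec
      rw [if_neg hk, if_neg hk2, if_neg hk, if_neg hk2]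

lemma diff_branch (r : ℝ) (hr : 0 < r) (a b : ℝ) (hb : 0 < b) (hab : a ^ 2 < b ^ 2) :
    ∃ s t : ℝ, r * Real.cosh s - r * Real.cosh t = a ∧
      r * Real.sinh s - r * Real.sinh t = b := by
  set D := Real.sqrt (b ^ 2 - a ^ 2) with hDdef
  have hD2 : D ^ 2 = b ^ 2 - a ^ 2 := Real.sq_sqrt (by linarith)
  have hD : 0 < D := Real.sqrt_pos.mpr (by linarith)
  have hpq : (b / D) ^ 2 - (a / D) ^ 2 = 1 := by
    field_simp
    linarith
  obtain ⟨m, hcm, hsm⟩ := exists_cosh (a / D) (b / D) hpq (by positivity)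
  refine ⟨m + Real.arsinh (D / (2 * r)), m - Real.arsinh (D / (2 * r)), ?_, ?_⟩
  · rw [Real.cosh_add, Real.cosh_sub, Real.sinh_arsinh, hcm, hsm]
    field_simp
    ring
  · rw [Real.sinh_add, Real.sinh_sub, Real.sinh_arsinh, hcm, hsm]
    field_simp
    ring

end MinkAux

namespace MinkAux

open Real

lemma eta_shift {n : ℕ} (u : Mink n) (e : ℝ) :
    eta n (fun k => if k = Fin.last n then e else u k / 2)
      = (∑ i : Fin n, (u i.castSucc / 2) ^ 2) - e ^ 2 := by
  unfold eta
  beta_reduce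
  rw [if_pos rfl]
  congr 1
  exact Finset.sum_congr rfl fun i _ => by rw [if_neg (castSucc_ne_last i)]

end MinkAux

/-- If an `SO₀(n,1)`-invariant additive subgroup `T` of `ℝ^{n+1}` contains
a vector `v` with `η(v) = r²` (`r > 0`), then `T` contains every `u` with `η(u) < r²`;
in particular `T` contains all timelike and all lightlike vectors. -/
theorem invariant_addSubgroup_contains_small_eta (n : ℕ) (hn : 1 ≤ n) (r : ℝ) (hr : 0 < r)
    (T : AddSubgroup (Mink n))
    (hinv : ∀ A : GL (Fin (n + 1)) ℝ, A ∈ SOo n → ∀ v ∈ T, (A : Matrix (Fin (n + 1)) (Fin (n + 1)) ℝ) *ᵥ v ∈ T)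
    (v : Mink n) (hvT : v ∈ T) (hv : eta n v = r ^ 2) :
    (∀ u : Mink n, eta n u < r ^ 2 → u ∈ T) ∧
      (∀ u : Mink n, eta n u ≤ 0 → u ∈ T) := by
  classical
  have hn' : 0 < n := hn
  have memT_iff : ∀ A : GL (Fin (n+1)) ℝ, A ∈ SOo n → ∀ u : Mink n,
      ((A : Matrix (Fin (n+1)) (Fin (n+1)) ℝ) *ᵥ u ∈ T ↔ u ∈ T) := by
    intro A hA u
    constructor
    · intro h
      have h2 := hinv A⁻¹ (inv_mem hA) _ h
      rwa [Matrix.mulVec_mulVec, ← Units.val_mul, inv_mul_cancel, Units.val_one,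
        Matrix.one_mulVec] at h2
    · exact hinv A hA u
  have reduce : ∀ u : Mink n, ∃ a b : ℝ, a ^ 2 - b ^ 2 = eta n u ∧
      (MinkAux.cvec n hn' a b ∈ T ↔ u ∈ T) := by
    intro u
    obtain ⟨A, hA, h1, _, _⟩ := MinkAux.reduce_aux n hn' n u
    have hzero : ∀ i : Fin n, 0 < i.val →
        ((A : Matrix (Fin (n+1)) (Fin (n+1)) ℝ) *ᵥ u) i.castSucc = 0 :=
      fun i hi => h1 i hi i.isLt
    have hw := MinkAux.eq_cvec_of_zeros hn' _ hzero
    refine ⟨((A : Matrix (Fin (n+1)) (Fin (n+1)) ℝ) *ᵥ u) (⟨0, hn'⟩ : Fin n).castSucc,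
      ((A : Matrix (Fin (n+1)) (Fin (n+1)) ℝ) *ᵥ u) (Fin.last n), ?_, ?_⟩
    · rw [← MinkAux.eta_cvec hn', ← hw]
      exact MinkAux.SOo_eta hA u
    · rw [← hw]
      exact memT_iff A hA u
  have hboost : ∀ a b s : ℝ, MinkAux.cvec n hn' a b ∈ T →
      MinkAux.cvec n hn' (Real.cosh s * a + Real.sinh s * b)
        (Real.sinh s * a + Real.cosh s * b) ∈ T := by
    intro a b s h
    obtain ⟨B, hB, hBval⟩ := MinkAux.boostM_mem_SOo (⟨0, hn'⟩ : Fin n) s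
    have := hinv B hB _ h
    rwa [hBval, MinkAux.boost_cvec] at this
  -- step 1 : `cvec r 0 ∈ T`
  have hq : MinkAux.cvec n hn' r 0 ∈ T := by
    obtain ⟨a, b, hab, hiff⟩ := reduce v
    have haT : MinkAux.cvec n hn' a b ∈ T := hiff.mpr hvT
    have hab2 : a ^ 2 - b ^ 2 = r ^ 2 := by rw [hab, hv]
    have ha : a ≠ 0 := by
      intro h
      rw [h] at hab2
      nlinarith
    obtain ⟨ε, hε, hεa⟩ : ∃ ε : ℝ, (ε = 1 ∨ ε = -1) ∧ 0 < ε * a := by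
      rcases lt_trichotomy 0 a with h | h | h
      · exact ⟨1, Or.inl rfl, by linarith⟩
      · exact absurd h.symm ha
      · exact ⟨-1, Or.inr rfl, by nlinarith⟩
    have hε2 : ε * ε = 1 := by rcases hε with h | h <;> rw [h] <;> norm_num
    have hpq : (ε * a / r) ^ 2 - (-(ε * b) / r) ^ 2 = 1 := by
      field_simp
      nlinarith [hε2, hab2]
    obtain ⟨s, hcs, hss⟩ := MinkAux.exists_cosh (-(ε * b) / r) (ε * a / r) hpq
      (by positivity)
    have hres := hboost a b s haT
    have e1 : Real.cosh s * a + Real.sinh s * b = ε * r := by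
      rw [hcs, hss]
      field_simp
      linear_combination ε * hab2
    have e2 : Real.sinh s * a + Real.cosh s * b = 0 := by
      rw [hcs, hss]
      ring
    rw [e1, e2] at hres
    rcases hε with h | h
    · rwa [h, one_mul] at hres
    · rw [h] at hres
      have h2 := T.neg_mem hres
      rwa [MinkAux.cvec_neg, show -(-1 * r) = r by ring, neg_zero] at h2
  -- the boost orbit of `cvec r 0`
  have hbr : ∀ s : ℝ, MinkAux.cvec n hn' (r * Real.cosh s) (r * Real.sinh s) ∈ T := by
    intro s
    have := hboost r 0 s hq
    rwa [show Real.cosh s * r + Real.sinh s * 0 = r * Real.cosh s by ring,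
      show Real.sinh s * r + Real.cosh s * 0 = r * Real.sinh s by ring] at this
  -- all timelike canonical vectors
  have htime : ∀ a b : ℝ, a ^ 2 < b ^ 2 → MinkAux.cvec n hn' a b ∈ T := by
    intro a b hab
    rcases lt_trichotomy 0 b with hb | hb | hb
    · obtain ⟨s, t, e1, e2⟩ := MinkAux.diff_branch r hr a b hb hab
      have := T.sub_mem (hbr s) (hbr t)
      rwa [MinkAux.cvec_sub, e1, e2] at this
    · exfalso; nlinarith
    · obtain ⟨s, t, e1, e2⟩ := MinkAux.diff_branch r hr (-a) (-b) (by linarith) (by nlinarith)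
      have := T.sub_mem (hbr t) (hbr s)
      rwa [MinkAux.cvec_sub, show r * Real.cosh t - r * Real.cosh s = a by linarith,
        show r * Real.sinh t - r * Real.sinh s = b by linarith] at this
  -- every vector is a sum of two timelike vectors
  have hall : ∀ u : Mink n, u ∈ T := by
    intro u
    set S : ℝ := ∑ i : Fin n, (u i.castSucc / 2) ^ 2 with hS
    have hS0 : 0 ≤ S := Finset.sum_nonneg fun i _ => sq_nonneg _
    set x : ℝ := u (Fin.last n) / 2 with hx
    set M : ℝ := |x| + S + 1 with hM
    have key : ∀ e : ℝ, S < e ^ 2 →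
        (fun k => if k = Fin.last n then e else u k / 2) ∈ T := by
      intro e he
      obtain ⟨a, b, hab, hiff⟩ := reduce (fun k => if k = Fin.last n then e else u k / 2)
      apply hiff.mp
      apply htime
      have hsh := MinkAux.eta_shift u e
      rw [← hS] at hsh
      rw [hsh] at hab
      linarith
    have h1 : S < (x + M) ^ 2 := by nlinarith [neg_abs_le x, hS0]
    have h2 : S < (x - M) ^ 2 := by nlinarith [le_abs_self x, hS0]
    have := T.add_mem (key _ h1) (key _ h2)
    have hsum : ((fun k => if k = Fin.last n then x + M else u k / 2)
        + (fun k => if k = Fin.last n then x - M else u k / 2)) = u := by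
      funext k
      simp only [Pi.add_apply]
      by_cases hk : k = Fin.last n
      · rw [if_pos hk, if_pos hk, hk, hx]
        ring
      · rw [if_neg hk, if_neg hk]
        ring
    rwa [hsum] at this
  exact ⟨fun u _ => hall u, fun u _ => hall u⟩
end
end

section
/- Let n ≥ 1 and let T be an additive subgroup of ℝ^{n+1} which is invariant under SO₀(n,1). If T contains a timelike vector v (i.e. η(v) = −r² < 0 for some r > 0), then T contains a nonzero spacelike vector; in fact T contains a vector w with η(w) = r². Consequently T = ℝ^{n+1}. -/
noncomputable section

open Matrix

namespace MyBoost

variable {n : ℕ}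

/-- spatial squared norm -/
def sp (n : ℕ) (b : Mink n) : ℝ := ∑ i : Fin n, b i.castSucc ^ 2

lemma sp_nonneg (b : Mink n) : 0 ≤ sp n b :=
  Finset.sum_nonneg fun _ _ => sq_nonneg _

def gg (n : ℕ) (b : Mink n) : ℝ := Real.sqrt (1 + sp n b)

lemma gg_sq (b : Mink n) : gg n b ^ 2 = 1 + sp n b :=
  Real.sq_sqrt (by linarith [sp_nonneg b])

lemma one_le_gg (b : Mink n) : 1 ≤ gg n b := by
  have h := sp_nonneg b
  have : (1:ℝ) = Real.sqrt 1 := (Real.sqrt_one).symm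
  rw [this, gg]
  exact Real.sqrt_le_sqrt (by linarith)

lemma gg_pos (b : Mink n) : 0 < 1 + gg n b := by linarith [one_le_gg b]

def BoostM (n : ℕ) (b : Mink n) : Matrix (Fin (n+1)) (Fin (n+1)) ℝ :=
  fun i j =>
    if i = Fin.last n then (if j = Fin.last n then gg n b else b j)
    else if j = Fin.last n then b i
    else (if i = j then 1 else 0) + b i * b j / (1 + gg n b)

lemma mulVec_last (b : Mink n) (u : Mink n) :
    (BoostM n b *ᵥ u) (Fin.last n)
      = (∑ k : Fin n, b k.castSucc * u k.castSucc) + gg n b * u (Fin.last n) := by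
  rw [mulVec, dotProduct, Fin.sum_univ_castSucc]
  simp [BoostM, (Fin.castSucc_lt_last _).ne]

lemma mulVec_castSucc (b : Mink n) (u : Mink n) (i : Fin n) :
    (BoostM n b *ᵥ u) i.castSucc
      = u i.castSucc + b i.castSucc *
          ((∑ k : Fin n, b k.castSucc * u k.castSucc) / (1 + gg n b) + u (Fin.last n)) := by
  rw [mulVec, dotProduct, Fin.sum_univ_castSucc]
  simp only [BoostM, (Fin.castSucc_lt_last _).ne, if_neg, if_pos rfl, ite_mul, one_mul, zero_mul,
    Fin.castSucc_inj, if_true, if_false]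
  rw [Finset.sum_congr rfl (fun k _ => by rw [add_mul]), Finset.sum_add_distrib]
  simp only [ite_mul, one_mul, zero_mul, Finset.sum_ite_eq, Finset.mem_univ, if_true]
  rw [show (∑ k : Fin n, b i.castSucc * b k.castSucc / (1 + gg n b) * u k.castSucc)
      = b i.castSucc * (∑ k : Fin n, b k.castSucc * u k.castSucc) / (1 + gg n b) by
    rw [Finset.mul_sum, Finset.sum_div]
    exact Finset.sum_congr rfl fun k _ => by ring]
  ring

lemma boost_eta (b : Mink n) (u : Mink n) :
    eta n (BoostM n b *ᵥ u) = eta n u := by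
  have hg := gg_sq b
  have hgp := gg_pos b
  set g := gg n b
  set d := ∑ k : Fin n, b k.castSucc * u k.castSucc with hd
  set α := d / (1 + g) + u (Fin.last n) with hα
  have h1 : ∀ i : Fin n, (BoostM n b *ᵥ u) i.castSucc = u i.castSucc + b i.castSucc * α :=
    fun i => mulVec_castSucc b u i
  rw [eta, mulVec_last]
  rw [Finset.sum_congr rfl (fun i _ => by rw [h1 i])]
  have hexp : ∑ i : Fin n, (u i.castSucc + b i.castSucc * α) ^ 2
      = (∑ i : Fin n, u i.castSucc ^ 2) + 2 * α * d + α ^ 2 * sp n b := by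
    rw [hd, sp, Finset.mul_sum, Finset.mul_sum, ← Finset.sum_add_distrib,
      ← Finset.sum_add_distrib]
    exact Finset.sum_congr rfl fun i _ => by ring
  rw [hexp, eta]
  have hsp : sp n b = g ^ 2 - 1 := by linarith
  rw [hsp, hα]
  field_simp
  ring

lemma sp_neg (b : Mink n) : sp n (-b) = sp n b := by
  unfold sp; exact Finset.sum_congr rfl fun i _ => by simp [neg_pow]

lemma gg_neg (b : Mink n) : gg n (-b) = gg n b := by
  unfold gg; rw [sp_neg]

lemma boost_mul_neg (b : Mink n) : BoostM n b * BoostM n (-b) = 1 := by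
  have hg := gg_sq b
  have hgp := gg_pos b
  ext i j
  rw [Matrix.mul_apply, Fin.sum_univ_castSucc]
  induction i using Fin.lastCases with
  | last =>
    induction j using Fin.lastCases with
    | last =>
      simp only [BoostM, (Fin.castSucc_lt_last _).ne, if_neg, if_pos rfl, if_true, if_false,
        gg_neg, Pi.neg_apply, Matrix.one_apply_eq]
      have hh : ∑ x : Fin n, b x.castSucc * -b x.castSucc = -sp n b := by
        rw [sp, ← Finset.sum_neg_distrib]
        exact Finset.sum_congr rfl fun k _ => by ring
      rw [hh]
      nlinarith [gg_sq b]
    | cast j =>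
      simp only [BoostM, (Fin.castSucc_lt_last _).ne, if_neg, if_pos rfl, if_true, if_false,
        gg_neg, Pi.neg_apply, Matrix.one_apply, mul_add, Finset.sum_add_distrib, mul_ite,
        mul_one, mul_zero, Finset.sum_ite_eq', Finset.mem_univ, neg_mul, mul_neg, neg_neg]
      have h1 : (∑ x : Fin n, if x.castSucc = j.castSucc then b x.castSucc else 0)
          = b j.castSucc := by simp [Fin.castSucc_inj]
      have h2 : ∑ x : Fin n, b x.castSucc * (b x.castSucc * b j.castSucc / (1 + gg n b))
          = sp n b * b j.castSucc / (1 + gg n b) := by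
        rw [sp, Finset.sum_mul, Finset.sum_div]
        exact Finset.sum_congr rfl fun k _ => by ring
      rw [h1, h2, if_neg (Fin.castSucc_lt_last j).ne']
      field_simp
      linear_combination (-b j.castSucc) * hg
  | cast i =>
    induction j using Fin.lastCases with
    | last =>
      simp only [BoostM, (Fin.castSucc_lt_last _).ne, if_neg, if_pos rfl, if_true, if_false,
        gg_neg, Pi.neg_apply, Matrix.one_apply, mul_add, add_mul, Finset.sum_add_distrib,
        mul_ite, ite_mul, mul_one, one_mul, mul_zero, zero_mul, Finset.sum_ite_eq',
        Finset.sum_ite_eq, Finset.mem_univ, neg_mul, mul_neg, neg_neg, Fin.castSucc_inj]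
      have h1 : (∑ x : Fin n, -((if i = x then b x.castSucc else 0)
            + b i.castSucc * b x.castSucc / (1 + gg n b) * b x.castSucc))
          = -(b i.castSucc + b i.castSucc * sp n b / (1 + gg n b)) := by
        rw [Finset.sum_neg_distrib, Finset.sum_add_distrib, Finset.sum_ite_eq]
        simp only [Finset.mem_univ, if_true]
        congr 2
        rw [sp, Finset.mul_sum, Finset.sum_div]
        exact Finset.sum_congr rfl fun k _ => by ring
      rw [h1]
      have hne : (1 + gg n b) ≠ 0 := ne_of_gt hgp
      have key : b i.castSucc + b i.castSucc * sp n b / (1 + gg n b)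
          = b i.castSucc * gg n b := by
        field_simp
        linear_combination (-b i.castSucc) * hg
      linarith [key]
    | cast j =>
      simp only [BoostM, (Fin.castSucc_lt_last _).ne, if_neg, if_pos rfl, if_true, if_false,
        gg_neg, Pi.neg_apply, Matrix.one_apply, mul_add, add_mul, Finset.sum_add_distrib,
        mul_ite, ite_mul, mul_one, one_mul, mul_zero, zero_mul, Finset.sum_ite_eq',
        Finset.sum_ite_eq, Finset.mem_univ, neg_mul, mul_neg, neg_neg, Fin.castSucc_inj]
      have h2 : (∑ x : Fin n, b i.castSucc * b x.castSucc / (1 + gg n b)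
            * (b x.castSucc * b j.castSucc / (1 + gg n b)))
          = b i.castSucc * b j.castSucc * sp n b / ((1 + gg n b) * (1 + gg n b)) := by
        have hne : (1 + gg n b) ≠ 0 := ne_of_gt hgp
        rw [sp, Finset.mul_sum, Finset.sum_div]
        exact Finset.sum_congr rfl fun k _ => by field_simp
      rw [h2]
      have hne : (1 + gg n b) ≠ 0 := ne_of_gt hgp
      have key : b i.castSucc * b j.castSucc / (1 + gg n b)
            + b i.castSucc * b j.castSucc / (1 + gg n b)
            + b i.castSucc * b j.castSucc * sp n b / ((1 + gg n b) * (1 + gg n b))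
          = b i.castSucc * b j.castSucc := by
        field_simp
        linear_combination (-(b i.castSucc * b j.castSucc)) * hg
      linarith [key]

def boostGL (n : ℕ) (b : Mink n) : GL (Fin (n+1)) ℝ :=
  ⟨BoostM n b, BoostM n (-b), boost_mul_neg b, by
    have h := boost_mul_neg (-b); rwa [neg_neg] at h⟩

lemma coe_boostGL (b : Mink n) : (boostGL n b : Matrix (Fin (n+1)) (Fin (n+1)) ℝ) = BoostM n b := rfl

lemma boostGL_mem_lorentz (b : Mink n) : boostGL n b ∈ LorentzGroup n :=
  fun u => boost_eta b u

lemma boost_zero : BoostM n (0 : Mink n) = 1 := by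
  have h1 : sp n (0 : Mink n) = 0 := by simp [sp]
  have h2 : gg n (0 : Mink n) = 1 := by simp [gg, h1]
  ext i j
  rw [Matrix.one_apply]
  simp only [BoostM, h2, Pi.zero_apply, zero_mul, zero_div, add_zero]
  split_ifs <;> simp_all

lemma cont_gg (c : Mink n) : Continuous fun t : ℝ => gg n (t • c) := by
  apply Real.continuous_sqrt.comp
  apply continuous_const.add
  unfold sp
  exact continuous_finset_sum _ fun k _ => by
    simp only [Pi.smul_apply, smul_eq_mul]
    fun_prop

lemma cont_boost (c : Mink n) :
    Continuous fun t : ℝ => BoostM n (t • c) := by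
  apply continuous_matrix
  intro i j
  simp only [BoostM, Pi.smul_apply, smul_eq_mul]
  by_cases h : i = Fin.last n <;> simp only [h, if_true, if_false]
  · by_cases h' : j = Fin.last n <;> simp only [h', if_true, if_false]
    · exact cont_gg c
    · fun_prop
  · by_cases h' : j = Fin.last n <;> simp only [h', if_true, if_false]
    · fun_prop
    · apply continuous_const.add
      apply Continuous.div (by fun_prop)
      · exact continuous_const.add (cont_gg c)
      · exact fun t => ne_of_gt (gg_pos _)

lemma boost_mem_SOo (b : Mink n) : boostGL n b ∈ SOo n := by
  refine ⟨⟨boostGL n b, boostGL_mem_lorentz b⟩, ?_, rfl⟩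
  let f : ℝ → ↥(LorentzGroup n) :=
    fun t => ⟨boostGL n (t • b), boostGL_mem_lorentz (t • b)⟩
  have hfc : Continuous f := by
    apply Continuous.subtype_mk
    rw [Units.continuous_iff]
    constructor
    · exact cont_boost b
    · have he : ∀ x : ℝ, Units.val ((boostGL n (x • b))⁻¹)
          = BoostM n (x • (-b)) := fun x => by
        show BoostM n (-(x • b)) = _
        congr 1
        ext i
        simp
      simp only [he]
      exact cont_boost (-b)
  have h0 : f 0 = 1 := by
    apply Subtype.ext
    apply Units.ext
    show BoostM n ((0:ℝ) • b) = 1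
    rw [zero_smul, boost_zero]
  have hpre : IsPreconnected (Set.range f) := isPreconnected_range hfc
  have hsub := hpre.subset_connectedComponent (x := (1 : ↥(LorentzGroup n))) ⟨0, h0⟩
  have h1 : f 1 = ⟨boostGL n b, boostGL_mem_lorentz b⟩ := by
    apply Subtype.ext; apply Units.ext
    show BoostM n ((1:ℝ) • b) = BoostM n b
    rw [one_smul]
  exact hsub ⟨1, h1⟩

def p0 (n : ℕ) (s : ℝ) : Mink n := fun i => if i = Fin.last n then s else 0

lemma eta_p0 (s : ℝ) : eta n (p0 n s) = -s^2 := by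
  unfold eta p0
  simp [(Fin.castSucc_lt_last _).ne]

lemma eta_neg (u : Mink n) : eta n (-u) = eta n u := by
  unfold eta
  simp [neg_pow]

lemma exists_boost (s : ℝ) (hs : 0 < s) (p : Mink n) (hp : eta n p = -s^2)
    (hpl : 0 < p (Fin.last n)) :
    BoostM n (fun i => p i / s) *ᵥ p0 n s = p := by
  set b : Mink n := fun i => p i / s with hb
  have hsp : sp n b = (p (Fin.last n))^2/s^2 - 1 := by
    unfold sp
    unfold eta at hp
    have : ∀ k : Fin n, b k.castSucc ^ 2 = p k.castSucc ^2 / s^2 := fun k => by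
      rw [hb]; ring
    rw [Finset.sum_congr rfl fun k _ => this k, ← Finset.sum_div]
    have hsum : ∑ i : Fin n, p i.castSucc ^ 2 = p (Fin.last n)^2 - s^2 := by linarith
    rw [hsum]
    field_simp
  have hgg : gg n b = p (Fin.last n) / s := by
    unfold gg
    rw [hsp, show 1 + ((p (Fin.last n))^2/s^2 - 1) = (p (Fin.last n)/s)^2 by
      field_simp
      ring]
    exact Real.sqrt_sq (le_of_lt (div_pos hpl hs))
  have hd : ∑ k : Fin n, b k.castSucc * (p0 n s) k.castSucc = 0 := by
    apply Finset.sum_eq_zero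
    intro k _
    simp [p0, (Fin.castSucc_lt_last _).ne]
  funext j
  induction j using Fin.lastCases with
  | last =>
    rw [mulVec_last, hd, hgg, p0]
    simp only [if_pos rfl]
    field_simp
    simp
  | cast j =>
    rw [mulVec_castSucc, hd, hb]
    simp only [p0, (Fin.castSucc_lt_last _).ne, if_neg, if_pos rfl, if_false]
    field_simp
    simp

/-- vector with one spatial coordinate `x` and time coordinate `h` -/
def vec2 (n : ℕ) (x h : ℝ) : Mink n :=
  fun i => if i = Fin.last n then h else if (i : ℕ) = 0 then x else 0

lemma vec2_last (x h : ℝ) : vec2 n x h (Fin.last n) = h := by simp [vec2]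

lemma eta_vec2 (hn : 1 ≤ n) (x h : ℝ) : eta n (vec2 n x h) = x^2 - h^2 := by
  unfold eta vec2
  simp only [(Fin.castSucc_lt_last _).ne, if_false, Fin.val_last, if_pos rfl]
  have : ∀ k : Fin n, ((if ((k.castSucc : Fin (n+1)) : ℕ) = 0 then x else 0)^2 : ℝ)
      = if k = (⟨0, hn⟩ : Fin n) then x^2 else 0 := by
    intro k
    have hc : ((k.castSucc : Fin (n+1)) : ℕ) = (k : ℕ) := rfl
    rw [hc]
    by_cases hk : (k : ℕ) = 0
    · rw [if_pos hk, if_pos (Fin.ext hk)]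
    · rw [if_neg hk, if_neg (fun hh => hk (by rw [hh]))]
      ring
  rw [Finset.sum_congr rfl fun k _ => this k, Finset.sum_ite_eq' Finset.univ _ (fun _ => x^2)]
  simp

lemma neg_vec2 (x h : ℝ) : -vec2 n x h = vec2 n (-x) (-h) := by
  funext i
  simp only [Pi.neg_apply, vec2]
  split_ifs <;> ring

lemma vec2_add (x1 h1 x2 h2 : ℝ) :
    vec2 n x1 h1 + vec2 n x2 h2 = vec2 n (x1+x2) (h1+h2) := by
  funext i
  simp only [Pi.add_apply, vec2]
  split_ifs <;> ring

lemma vec2_zero (s : ℝ) : vec2 n 0 s = p0 n s := by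
  funext i
  simp only [vec2, p0]
  split_ifs <;> rfl

lemma eta_add_p0 (x : Mink n) (s : ℝ) :
    eta n (x + p0 n s) = eta n x - 2*s*(x (Fin.last n)) - s^2 := by
  unfold eta p0
  simp [(Fin.castSucc_lt_last _).ne]
  ring

end MyBoost

open MyBoost

/-- If an `SO₀(n,1)`-invariant additive subgroup `T` of `ℝ^{n+1}` contains
a timelike vector `v` with `η(v) = −r²` (`r > 0`), then `T` contains a nonzero spacelike
vector, in fact one with `η(w) = r²`; consequently `T = ℝ^{n+1}`. -/
theorem invariant_addSubgroup_eq_top_of_timelike (n : ℕ) (hn : 1 ≤ n) (r : ℝ) (hr : 0 < r)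
    (T : AddSubgroup (Mink n))
    (hinv : ∀ A : GL (Fin (n + 1)) ℝ, A ∈ SOo n → ∀ v ∈ T, (A : Matrix (Fin (n + 1)) (Fin (n + 1)) ℝ) *ᵥ v ∈ T)
    (v : Mink n) (hvT : v ∈ T) (hv : eta n v = -r ^ 2) :
    ((∃ w ∈ T, 0 < eta n w) ∧ ∃ w ∈ T, eta n w = r ^ 2) ∧ T = ⊤ := by
  classical
  have hpull : ∀ A : GL (Fin (n + 1)) ℝ, A ∈ SOo n → ∀ x ∈ T,
      ∀ y : Mink n, (A : Matrix (Fin (n + 1)) (Fin (n + 1)) ℝ) *ᵥ y = x → y ∈ T := by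
    intro A hA x hx y hxy
    have h2 := hinv A⁻¹ (inv_mem hA) x hx
    rw [← hxy, Matrix.mulVec_mulVec, ← Units.val_mul, inv_mul_cancel, Units.val_one,
      Matrix.one_mulVec] at h2
    exact h2
  -- step 1 : the base point (0,…,0,r) lies in T
  have hq : p0 n r ∈ T := by
    have hvl : v (Fin.last n) ≠ 0 := by
      intro h0
      have hnn : (0:ℝ) ≤ ∑ i : Fin n, v i.castSucc ^2 :=
        Finset.sum_nonneg fun _ _ => sq_nonneg _
      unfold eta at hv
      rw [h0] at hv
      nlinarith
    rcases hvl.lt_or_gt with h | h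
    · have hnv : eta n (-v) = -r^2 := by rw [eta_neg, hv]
      have hnl : 0 < (-v) (Fin.last n) := by
        simp only [Pi.neg_apply]; linarith
      have hb := exists_boost r hr (-v) hnv hnl
      refine hpull (boostGL n (fun i => (-v) i / r)) (boost_mem_SOo _) (-v) (T.neg_mem hvT) (p0 n r) ?_
      rw [coe_boostGL]; exact hb
    · have hb := exists_boost r hr v hv h
      refine hpull (boostGL n (fun i => v i / r)) (boost_mem_SOo _) v hvT (p0 n r) ?_
      rw [coe_boostGL]; exact hb
  -- step 2 : the whole sheet {η = -r², last > 0} lies in T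
  have hsheet : ∀ p : Mink n, eta n p = -r^2 → 0 < p (Fin.last n) → p ∈ T := by
    intro p hp hpl
    have hb := exists_boost r hr p hp hpl
    have h2 := hinv (boostGL n (fun i => p i / r)) (boost_mem_SOo _) _ hq
    rwa [coe_boostGL, hb] at h2
  -- step 3 : a spacelike vector in T
  have h5 : (Real.sqrt 5)^2 = 5 := Real.sq_sqrt (by norm_num)
  have h5p : 0 < Real.sqrt 5 := Real.sqrt_pos.2 (by norm_num)
  have ha1 : vec2 n (r/2) (r * Real.sqrt 5 / 2) ∈ T :=
    hsheet _ (by rw [eta_vec2 hn]; nlinarith) (by rw [vec2_last]; positivity)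
  have ha2 : vec2 n (r/2) (-(r * Real.sqrt 5 / 2)) ∈ T := by
    have h1 : vec2 n (-(r/2)) (r * Real.sqrt 5 / 2) ∈ T :=
      hsheet _ (by rw [eta_vec2 hn]; nlinarith) (by rw [vec2_last]; positivity)
    have h2 := T.neg_mem h1
    rwa [MyBoost.neg_vec2, neg_neg] at h2
  have hw : vec2 n r 0 ∈ T := by
    have h1 := T.add_mem ha1 ha2
    rwa [MyBoost.vec2_add, show r/2 + r/2 = r by ring,
      show r*Real.sqrt 5/2 + -(r*Real.sqrt 5/2) = 0 by ring] at h1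
  have hwe : eta n (vec2 n r 0) = r^2 := by rw [eta_vec2 hn]; ring
  -- step 4 : deep timelike vectors lie in T
  have hsheet2 : ∀ p : Mink n, eta n p ≤ -(2*r)^2 → 0 < p (Fin.last n) → p ∈ T := by
    intro p hp hpl
    set s := Real.sqrt (-eta n p) with hs
    have hs2 : s^2 = -eta n p := Real.sq_sqrt (by nlinarith)
    have hsge : 2*r ≤ s := by nlinarith [Real.sqrt_nonneg (-eta n p)]
    have hspos : 0 < s := by linarith
    have hpe : eta n p = -s^2 := by linarith
    set x := Real.sqrt (s^2/4 - r^2) with hx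
    have hx2 : x^2 = s^2/4 - r^2 := Real.sq_sqrt (by nlinarith)
    have ha : vec2 n x (s/2) ∈ T :=
      hsheet _ (by rw [eta_vec2 hn]; nlinarith) (by rw [vec2_last]; linarith)
    have hb : vec2 n (-x) (s/2) ∈ T :=
      hsheet _ (by rw [eta_vec2 hn]; nlinarith) (by rw [vec2_last]; linarith)
    have hps : p0 n s ∈ T := by
      have h1 := T.add_mem ha hb
      rwa [MyBoost.vec2_add, show x + -x = (0:ℝ) by ring, show s/2 + s/2 = s by ring,
        MyBoost.vec2_zero] at h1
    have hbm := exists_boost s hspos p hpe hpl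
    have h2 := hinv (boostGL n (fun i => p i / s)) (boost_mem_SOo _) _ hps
    rwa [coe_boostGL, hbm] at h2
  -- step 5 : T = ⊤
  have htop : T = ⊤ := by
    ext x
    simp only [AddSubgroup.mem_top, iff_true]
    set m := x (Fin.last n) with hm
    set E := |eta n x| with hE
    set s := 2*r + 2*|m| + E + 1 with hsdef
    have habs0 : 0 ≤ |m| := abs_nonneg m
    have habs0' : 0 ≤ E := abs_nonneg _
    have hspos : 0 < s := by rw [hsdef]; linarith
    have habs1 : -|m| ≤ m := neg_abs_le m
    have habs2 : m ≤ |m| := le_abs_self m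
    have habs3 : eta n x ≤ E := le_abs_self _
    have hsm : -(s * |m|) ≤ s * m := by nlinarith
    have hc : p0 n s ∈ T := by
      apply hsheet2
      · rw [eta_p0]; nlinarith
      · show 0 < p0 n s (Fin.last n)
        simp only [p0, if_pos rfl, if_true]
        exact hspos
    have hxc : x + p0 n s ∈ T := by
      apply hsheet2
      · rw [eta_add_p0, ← hm]; nlinarith
      · show 0 < (x + p0 n s) (Fin.last n)
        simp only [Pi.add_apply, p0, if_pos rfl, if_true, ← hm]
        linarith
    have h1 := T.sub_mem hxc hc
    simpa using h1
  exact ⟨⟨⟨_, hw, by rw [hwe]; positivity⟩, ⟨_, hw, hwe⟩⟩, htop⟩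
end
end
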